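/- Let a, b, c, d lie in positive order on the unit circle. Set d1 := 2·artanh(√((|a−b|·|c−d|)/(|a−c|·|b−d|))) and d2 := 2·artanh(√((|a−d|·|b−c|)/(|a−c|·|b−d|))). Then d1 + d2 ≥ 4·log(√2 + 1), with equality if and only if the absolute cross ratio (|a−c|·|b−d|)/(|a−b|·|c−d|) equals 2. -/

import Mathlib

open Complex

/-- Points `a, b, c, d` lie in positive order on the unit circle. -/
def PosOrderOnCircle (a b c d : ℂ) : Prop :=
  ∃ θ₁ θ₂ θ₃ θ₄ : ℝ, θ₁ < θ₂ ∧ θ₂ < θ₃ ∧ θ₃ < θ₄ ∧ θ₄ < θ₁ + 2 * Real.pi ∧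
    a = Complex.exp (θ₁ * Complex.I) ∧ b = Complex.exp (θ₂ * Complex.I) ∧
    c = Complex.exp (θ₃ * Complex.I) ∧ d = Complex.exp (θ₄ * Complex.I)

/-- The inverse hyperbolic tangent. -/
noncomputable def artanh (x : ℝ) : ℝ := Real.log ((1 + x) / (1 - x)) / 2

lemma exp_sub_exp_aux (z : ℂ) :
    Complex.exp (z*I) - Complex.exp ((-z)*I) = 2 * Complex.sin z * I := by
  rw [Complex.sin]
  linear_combination (Complex.exp (z*I) - Complex.exp (-z*I)) * Complex.I_sq

lemma chord_abs (α β : ℝ) : ‖Complex.exp (α*Complex.I) - Complex.exp (β*Complex.I)‖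
    = 2 * |Real.sin ((α-β)/2)| := by
  have e1 : (α:ℂ)*I = (((α+β)/2 :ℝ):ℂ)*I + (((α-β)/2:ℝ):ℂ)*I := by push_cast; ring
  have e2 : (β:ℂ)*I = (((α+β)/2 :ℝ):ℂ)*I + (-(((α-β)/2:ℝ):ℂ))*I := by push_cast; ring
  rw [e1, e2, Complex.exp_add, Complex.exp_add, ← mul_sub, norm_mul,
    Complex.norm_exp_ofReal_mul_I, one_mul, exp_sub_exp_aux, ← Complex.ofReal_sin,
    norm_mul, norm_mul, Complex.norm_two, Complex.norm_I, Complex.norm_real, Real.norm_eq_abs, mul_one]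

lemma chord_abs' (α β : ℝ) (h1 : α < β) (h2 : β < α + 2*Real.pi) :
    ‖Complex.exp (α*Complex.I) - Complex.exp (β*Complex.I)‖
      = 2 * Real.sin ((β-α)/2) := by
  rw [chord_abs, show (α-β)/2 = -((β-α)/2) by ring, Real.sin_neg, abs_neg,
    abs_of_pos (Real.sin_pos_of_pos_of_lt_pi (by linarith) (by linarith [Real.pi_pos]))]

lemma trig_ptolemy (x y z : ℝ) :
    Real.sin (x+y) * Real.sin (y+z) = Real.sin x * Real.sin z + Real.sin y * Real.sin (x+y+z) := by
  simp only [Real.sin_add, Real.cos_add]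
  linear_combination (Real.sin x * Real.sin z) * (Real.sin_sq_add_cos_sq y)

lemma core' (u v : ℝ) (hu0 : 0 < u) (hv0 : 0 < v) (huv : u^2 + v^2 = 1) :
    2 * artanh u + 2 * artanh v ≥ 4 * Real.log (Real.sqrt 2 + 1) ∧
    (2 * artanh u + 2 * artanh v = 4 * Real.log (Real.sqrt 2 + 1) ↔ u = v) := by
  have hu1 : u < 1 := by nlinarith
  have hv1 : v < 1 := by nlinarith
  have hsq2 : (Real.sqrt 2)^2 = 2 := Real.sq_sqrt (by norm_num)
  have hsq2pos : 1 < Real.sqrt 2 := by nlinarith [Real.sqrt_pos.mpr (show (0:ℝ) < 2 by norm_num)]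
  have hp1 : 1 < u + v := by nlinarith
  have hp2 : u + v ≤ Real.sqrt 2 := by nlinarith [sq_nonneg (u - v)]
  have e1 : (1+u)*(1+v) = (u+v+1)^2/2 := by linear_combination (-1/2 : ℝ) * huv
  have e2 : (1-u)*(1-v) = (u+v-1)^2/2 := by linear_combination (-1/2 : ℝ) * huv
  have key : 2 * artanh u + 2 * artanh v = 2 * Real.log ((u+v+1)/(u+v-1)) := by
    unfold artanh
    rw [mul_div_cancel₀ _ (two_ne_zero), mul_div_cancel₀ _ (two_ne_zero)]
    rw [← Real.log_mul (ne_of_gt (div_pos (by linarith) (by linarith)))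
      (ne_of_gt (div_pos (by linarith) (by linarith)))]
    have hne : ((u+v-1)^2 : ℝ) ≠ 0 := pow_ne_zero 2 (ne_of_gt (by linarith))
    have hthis : (1+u)/(1-u) * ((1+v)/(1-v)) = ((u+v+1)/(u+v-1))^2 := by
      rw [div_mul_div_comm, e1, e2, div_pow]
      field_simp
    rw [hthis, Real.log_pow]
    push_cast; ring
  have hrhs : 4 * Real.log (Real.sqrt 2 + 1) = 2 * Real.log ((Real.sqrt 2 + 1)/(Real.sqrt 2 - 1)) := by
    have h1 : (Real.sqrt 2 + 1)/(Real.sqrt 2 - 1) = (Real.sqrt 2 + 1)^2 := by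
      rw [div_eq_iff (by linarith)]
      nlinarith
    rw [h1, Real.log_pow]
    push_cast; ring
  have hXpos : 0 < (u+v+1)/(u+v-1) := div_pos (by linarith) (by linarith)
  have hYpos : 0 < (Real.sqrt 2 + 1)/(Real.sqrt 2 - 1) := div_pos (by linarith) (by linarith)
  have hXY : (Real.sqrt 2 + 1)/(Real.sqrt 2 - 1) ≤ (u+v+1)/(u+v-1) := by
    rw [div_le_div_iff₀ (by linarith) (by linarith)]
    have hr : (Real.sqrt 2 + 1)*(u+v-1) - (u+v+1)*(Real.sqrt 2 - 1)
        = 2*(u+v) - 2*Real.sqrt 2 := by ring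
    linarith
  constructor
  · rw [key, hrhs]
    have := (Real.log_le_log_iff hYpos hXpos).mpr hXY
    linarith
  · rw [key, hrhs]
    constructor
    · intro h
      have hlog : Real.log ((u+v+1)/(u+v-1)) = Real.log ((Real.sqrt 2 + 1)/(Real.sqrt 2 - 1)) := by
        linarith
      have heq : (u+v+1)/(u+v-1) = (Real.sqrt 2 + 1)/(Real.sqrt 2 - 1) :=
        Real.log_injOn_pos (Set.mem_Ioi.mpr hXpos) (Set.mem_Ioi.mpr hYpos) hlog
      rw [div_eq_div_iff (by linarith) (by linarith)] at heq
      have hpeq : u + v = Real.sqrt 2 := by linear_combination (-1/2 : ℝ) * heq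
      have hs2e : (u+v)^2 = 2 := by rw [hpeq]; exact hsq2
      have hz : (u-v)^2 = 0 := by linear_combination 2*huv - hs2e
      have := pow_eq_zero_iff (n := 2) (by norm_num) |>.mp hz
      linarith
    · intro h
      subst h
      have h2 : 2*u^2 = 1 := by linarith
      have key2 : (2*u - Real.sqrt 2)*(2*u + Real.sqrt 2) = 0 := by
        linear_combination 2*h2 - hsq2
      rcases mul_eq_zero.mp key2 with h' | h'
      · have hpeq : u + u = Real.sqrt 2 := by linarith
        rw [hpeq]
      · linarith

lemma main_ineq (A B C : ℝ) (hA : 0 < A) (hB : 0 < B) (hC : A + B = C) :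
    2 * artanh (Real.sqrt (A/C)) + 2 * artanh (Real.sqrt (B/C)) ≥ 4 * Real.log (Real.sqrt 2 + 1) ∧
    (2 * artanh (Real.sqrt (A/C)) + 2 * artanh (Real.sqrt (B/C)) = 4 * Real.log (Real.sqrt 2 + 1)
      ↔ C/A = 2) := by
  have hC0 : 0 < C := by linarith
  have hAC : 0 < A/C := div_pos hA hC0
  have hBC : 0 < B/C := div_pos hB hC0
  have hu0 : 0 < Real.sqrt (A/C) := Real.sqrt_pos.mpr hAC
  have hv0 : 0 < Real.sqrt (B/C) := Real.sqrt_pos.mpr hBC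
  have huv : (Real.sqrt (A/C))^2 + (Real.sqrt (B/C))^2 = 1 := by
    rw [Real.sq_sqrt hAC.le, Real.sq_sqrt hBC.le, ← add_div, hC, div_self (ne_of_gt hC0)]
  obtain ⟨h1, h2⟩ := core' _ _ hu0 hv0 huv
  refine ⟨h1, h2.trans ?_⟩
  constructor
  · intro h
    have hACBC : A/C = B/C := by
      have h' := congrArg (·^2) h
      simpa [Real.sq_sqrt hAC.le, Real.sq_sqrt hBC.le] using h'
    have hAB : A = B := by
      field_simp at hACBC
      exact hACBC
    rw [div_eq_iff (ne_of_gt hA)]; linarith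
  · intro h
    have hCA : C = 2*A := by
      rw [div_eq_iff (ne_of_gt hA)] at h; linarith
    have hAB : A = B := by linarith
    rw [hAB]

/-- The sum of the hyperbolic distances between the two pairs of opposite sides
of an ideal hyperbolic quadrilateral is at least `4 log(√2 + 1)`, with equality iff
the absolute cross ratio equals `2`. -/
theorem sum_of_distances_ge (a b c d : ℂ)
    (hord : PosOrderOnCircle a b c d) :
    let d1 := 2 * artanh (Real.sqrt
      ((‖a - b‖ * ‖c - d‖) /
        (‖a - c‖ * ‖b - d‖)))
    let d2 := 2 * artanh (Real.sqrt
      ((‖a - d‖ * ‖b - c‖) /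
        (‖a - c‖ * ‖b - d‖)))
    d1 + d2 ≥ 4 * Real.log (Real.sqrt 2 + 1) ∧
    (d1 + d2 = 4 * Real.log (Real.sqrt 2 + 1) ↔
      (‖a - c‖ * ‖b - d‖) /
        (‖a - b‖ * ‖c - d‖) = 2) := by
  obtain ⟨θ₁, θ₂, θ₃, θ₄, h12, h23, h34, h41, ha, hb, hc, hd⟩ := hord
  subst ha hb hc hd
  have hpi := Real.pi_pos
  have hab := chord_abs' θ₁ θ₂ h12 (by linarith)
  have hcd := chord_abs' θ₃ θ₄ h34 (by linarith)
  have hac := chord_abs' θ₁ θ₃ (by linarith) (by linarith)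
  have hbd := chord_abs' θ₂ θ₄ (by linarith) (by linarith)
  have had := chord_abs' θ₁ θ₄ (by linarith) (by linarith)
  have hbc := chord_abs' θ₂ θ₃ h23 (by linarith)
  have s1 : 0 < Real.sin ((θ₂-θ₁)/2) :=
    Real.sin_pos_of_pos_of_lt_pi (by linarith) (by linarith)
  have s2 : 0 < Real.sin ((θ₄-θ₃)/2) :=
    Real.sin_pos_of_pos_of_lt_pi (by linarith) (by linarith)
  have s3 : 0 < Real.sin ((θ₄-θ₁)/2) :=
    Real.sin_pos_of_pos_of_lt_pi (by linarith) (by linarith)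
  have s4 : 0 < Real.sin ((θ₃-θ₂)/2) :=
    Real.sin_pos_of_pos_of_lt_pi (by linarith) (by linarith)
  have hA : 0 < ‖Complex.exp (θ₁*Complex.I) - Complex.exp (θ₂*Complex.I)‖ *
      ‖Complex.exp (θ₃*Complex.I) - Complex.exp (θ₄*Complex.I)‖ := by
    rw [hab, hcd]; positivity
  have hB : 0 < ‖Complex.exp (θ₁*Complex.I) - Complex.exp (θ₄*Complex.I)‖ *
      ‖Complex.exp (θ₂*Complex.I) - Complex.exp (θ₃*Complex.I)‖ := by
    rw [had, hbc]; positivity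
  have hpt := trig_ptolemy ((θ₂-θ₁)/2) ((θ₃-θ₂)/2) ((θ₄-θ₃)/2)
  rw [show (θ₂-θ₁)/2 + (θ₃-θ₂)/2 = (θ₃-θ₁)/2 by ring,
      show (θ₃-θ₂)/2 + (θ₄-θ₃)/2 = (θ₄-θ₂)/2 by ring,
      show (θ₃-θ₁)/2 + (θ₄-θ₃)/2 = (θ₄-θ₁)/2 by ring] at hpt
  have hC : ‖Complex.exp (θ₁*Complex.I) - Complex.exp (θ₂*Complex.I)‖ *
      ‖Complex.exp (θ₃*Complex.I) - Complex.exp (θ₄*Complex.I)‖ +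
      ‖Complex.exp (θ₁*Complex.I) - Complex.exp (θ₄*Complex.I)‖ *
      ‖Complex.exp (θ₂*Complex.I) - Complex.exp (θ₃*Complex.I)‖ =
      ‖Complex.exp (θ₁*Complex.I) - Complex.exp (θ₃*Complex.I)‖ *
      ‖Complex.exp (θ₂*Complex.I) - Complex.exp (θ₄*Complex.I)‖ := by
    rw [hab, hcd, hac, hbd, had, hbc]
    linear_combination (-4 : ℝ) * hpt
  exact main_ineq _ _ _ hA hB hC
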